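/- Let V be a finite-dimensional real normed vector space. Let C ⊆ V be a nonempty closed convex set which is locally polyhedral with convex local cones (Γ_c)_{c ∈ C}. Suppose there exist x ∈ V and a closed convex proper cone Γ ⊆ V with C ⊆ x + Γ. Then C = ⋂ {c + Γ_c : c ∈ C and Γ_c is proper}; i.e., C is completely determined by its proper local cones. -/

import Mathlib

open Pointwise

/-- A cone in a real vector space: contains `0` and is closed under
multiplication by nonnegative real scalars. -/
def IsCone {V : Type*} [AddCommGroup V] [Module ℝ V] (Γ : Set V) : Prop :=
  (0 : V) ∈ Γ ∧ ∀ r : ℝ, 0 ≤ r → ∀ v ∈ Γ, r • v ∈ Γ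

/-- A proper cone: a cone containing no line through the origin. -/
def IsProperCone {V : Type*} [AddCommGroup V] [Module ℝ V] (Γ : Set V) : Prop :=
  IsCone Γ ∧ ∀ v ∈ Γ, -v ∈ Γ → v = 0

lemma sum_mem_cone {V : Type*} [AddCommGroup V] [Module ℝ V] {Γ : Set V}
    (hc : IsCone Γ) (hconv : Convex ℝ Γ) {ι : Type*} (t : Finset ι) (w : ι → ℝ) (z : ι → V)
    (hw : ∀ i ∈ t, 0 ≤ w i) (hz : ∀ i ∈ t, z i ∈ Γ) : ∑ i ∈ t, w i • z i ∈ Γ := by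
  have hadd : ∀ a b : V, a ∈ Γ → b ∈ Γ → a + b ∈ Γ := by
    intro a b ha hb
    have h1 := hconv ha hb (by norm_num : (0:ℝ) ≤ 1/2) (by norm_num : (0:ℝ) ≤ 1/2) (by norm_num)
    have h2 := hc.2 2 (by norm_num) _ h1
    have : (2:ℝ) • ((1/2 : ℝ) • a + (1/2 : ℝ) • b) = a + b := by module
    rwa [this] at h2
  exact Finset.sum_induction _ (· ∈ Γ) hadd hc.1 (fun i hi => hc.2 _ (hw i hi) _ (hz i hi))

/-- key padding sum identity -/
lemma pad_sum {M : Type*} [AddCommMonoid M] {ι : Type*} [Fintype ι] {n d : ℕ}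
    (hcard : Fintype.card ι = n) (hn : n ≤ d) (e : ι ≃ Fin n) (φ : ι → M) :
    ∑ i : Fin d, (if h : (i : ℕ) < n then φ (e.symm ⟨i, h⟩) else 0) = ∑ j, φ j := by
  set F : ℕ → M := fun i => if h : i < n then φ (e.symm ⟨i, h⟩) else 0 with hF
  have h1 : ∑ i : Fin d, (if h : (i : ℕ) < n then φ (e.symm ⟨i, h⟩) else 0)
      = ∑ i ∈ Finset.range d, F i := by
    rw [Finset.sum_range fun i => F i]
  rw [h1]
  have h2 : ∑ i ∈ Finset.range d, F i = ∑ i ∈ Finset.range n, F i := by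
    refine (Finset.sum_subset (Finset.range_subset_range.2 hn) ?_).symm
    intro i _ hi
    simp only [Finset.mem_range, not_lt] at hi
    simp [hF, Nat.not_lt.2 hi]
  rw [h2]
  have h3 : ∑ i ∈ Finset.range n, F i = ∑ j : Fin n, φ (e.symm j) := by
    rw [Finset.sum_range fun i => F i]
    refine Finset.sum_congr rfl fun j _ => ?_
    simp [hF, j.2]
  rw [h3]
  exact Equiv.sum_comp e.symm φ

lemma exists_coercive_functional {V : Type*} [NormedAddCommGroup V] [NormedSpace ℝ V]
    [FiniteDimensional ℝ V] {Γ : Set V} (hΓclosed : IsClosed Γ) (hΓconvex : Convex ℝ Γ)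
    (hΓproper : IsProperCone Γ) :
    ∃ g : V →L[ℝ] ℝ, ∃ u : ℝ, 0 < u ∧ ∀ v ∈ Γ, u * ‖v‖ ≤ g v := by
  classical
  set S : Set V := Γ ∩ Metric.sphere 0 1 with hS
  by_cases hSne : S.Nonempty
  swap
  · refine ⟨0, 1, one_pos, fun v hv => ?_⟩
    have hv0 : v = 0 := by
      by_contra h
      exact hSne ⟨‖v‖⁻¹ • v, hΓproper.1.2 _ (inv_nonneg.2 (norm_nonneg v)) v hv, by
        simp [norm_smul, inv_mul_cancel₀ (norm_ne_zero_iff.2 h)]⟩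
    simp [hv0]
  obtain ⟨s₀, hs₀⟩ := hSne
  set d : ℕ := Module.finrank ℝ V + 1 with hd
  have hScompact : IsCompact S := by
    refine (isCompact_closedBall (0:V) 1).of_isClosed_subset
      (hΓclosed.inter Metric.isClosed_sphere) ?_
    exact fun v hv => Metric.sphere_subset_closedBall hv.2
  set φ : (Fin d → ℝ) × (Fin d → V) → V := fun p => ∑ i, p.1 i • p.2 i with hφ
  have hφcont : Continuous φ := by
    refine continuous_finset_sum _ fun i _ => ?_
    exact ((continuous_apply i).comp continuous_fst).smul
      ((continuous_apply i).comp continuous_snd)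
  set P : Set ((Fin d → ℝ) × (Fin d → V)) :=
    (stdSimplex ℝ (Fin d)) ×ˢ (Set.univ.pi fun _ => S) with hP
  have hPcompact : IsCompact P :=
    (isCompact_stdSimplex ℝ (Fin d)).prod (isCompact_univ_pi fun _ => hScompact)
  set K : Set V := φ '' P with hK
  have hKcompact : IsCompact K := hPcompact.image hφcont
  -- convexHull S ⊆ K
  have hhull : convexHull ℝ S ⊆ K := by
    intro x hx
    obtain ⟨ι, hι, z, w, hzS, hAI, hwpos, hwsum, hwz⟩ :=
      eq_pos_convex_span_of_mem_convexHull hx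
    set n : ℕ := Fintype.card ι with hn
    have hnd : n ≤ d := by
      have := hAI.card_le_finrank_succ (k := ℝ)
      have h2 : Module.finrank ℝ (vectorSpan ℝ (Set.range z)) ≤ Module.finrank ℝ V :=
        Submodule.finrank_le _
      omega
    set e : ι ≃ Fin n := Fintype.equivFin ι with he
    set w' : Fin d → ℝ := fun i => if h : (i : ℕ) < n then w (e.symm ⟨i, h⟩) else 0 with hw'
    set z' : Fin d → V := fun i => if h : (i : ℕ) < n then z (e.symm ⟨i, h⟩) else s₀ with hz'
    refine ⟨(w', z'), ⟨⟨fun i => ?_, ?_⟩, ?_⟩, ?_⟩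
    · simp only [hw']
      split
      · exact (hwpos _).le
      · exact le_refl 0
    · rw [hw']
      rw [pad_sum rfl hnd e w]
      exact hwsum
    · intro i _
      simp only [hz']
      split
      · exact hzS (Set.mem_range_self _)
      · exact hs₀
    · show ∑ i, w' i • z' i = x
      have : ∀ i : Fin d, w' i • z' i
          = (if h : (i : ℕ) < n then (fun j => w j • z j) (e.symm ⟨i, h⟩) else 0) := by
        intro i
        simp only [hw', hz']
        split
        · rfl
        · simp
      rw [Finset.sum_congr rfl fun i _ => this i, pad_sum rfl hnd e (fun j => w j • z j)]
      exact hwz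
  have hK0 : (0 : V) ∉ K := by
    rintro ⟨⟨w, z⟩, ⟨⟨hw0, hwsum⟩, hzS⟩, hzero⟩
    have hzS' : ∀ i, z i ∈ S := fun i => hzS i (Set.mem_univ i)
    have : ∃ i, w i ≠ 0 := by
      by_contra h
      push_neg at h
      simp [h] at hwsum
    obtain ⟨i, hi⟩ := this
    have hsplit : w i • z i + ∑ j ∈ Finset.univ.erase i, w j • z j = 0 :=
      (Finset.add_sum_erase _ (fun j => w j • z j) (Finset.mem_univ i)).trans hzero
    have hneg : -(w i • z i) ∈ Γ := by
      have : ∑ j ∈ Finset.univ.erase i, w j • z j = -(w i • z i) := by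
        linear_combination (norm := abel) hsplit
      rw [← this]
      exact sum_mem_cone hΓproper.1 hΓconvex _ _ _ (fun j _ => hw0 j)
        (fun j _ => (hzS' j).1)
    have hmem : w i • z i ∈ Γ := hΓproper.1.2 _ (hw0 i) _ (hzS' i).1
    have := hΓproper.2 _ hmem hneg
    rcases smul_eq_zero.1 this with h | h
    · exact hi h
    · have := (hzS' i).2
      rw [mem_sphere_zero_iff_norm] at this
      rw [h] at this
      simp at this
  -- separate 0 from closure of hull
  set D : Set V := closure (convexHull ℝ S) with hD
  have hDK : D ⊆ K := closure_minimal hhull hKcompact.isClosed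
  have h0D : (0 : V) ∉ D := fun h => hK0 (hDK h)
  obtain ⟨g, u, hgu, hgD⟩ :=
    geometric_hahn_banach_point_closed ((convex_convexHull ℝ S).closure) isClosed_closure h0D
  have hu : 0 < u := by simpa using hgu
  refine ⟨g, u, hu, fun v hv => ?_⟩
  rcases eq_or_ne v 0 with rfl | hv0
  · simp
  · set w := ‖v‖⁻¹ • v with hw
    have hwS : w ∈ S := ⟨hΓproper.1.2 _ (inv_nonneg.2 (norm_nonneg v)) v hv, by
      simp [hw, norm_smul, inv_mul_cancel₀ (norm_ne_zero_iff.2 hv0)]⟩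
    have hgw : u < g w := hgD _ (subset_closure (subset_convexHull ℝ S hwS))
    have hvw : v = ‖v‖ • w := by
      rw [hw, smul_smul, mul_inv_cancel₀ (norm_ne_zero_iff.2 hv0), one_smul]
    have hgv : g v = ‖v‖ * g w := by
      conv_lhs => rw [hvw]
      rw [map_smul, smul_eq_mul]
    calc u * ‖v‖ ≤ g w * ‖v‖ := by
          have := norm_nonneg v
          nlinarith
      _ = g v := by rw [hgv]; ring

/-- small step into C along a local cone direction -/

lemma local_step {V : Type*} [NormedAddCommGroup V] [NormedSpace ℝ V]
    {C Γc : Set V} {c : V} (hcone : IsCone Γc)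
    (hU : ∃ U ∈ nhds c, C ∩ U = (c +ᵥ Γc) ∩ U) {v : V} (hv : v ∈ Γc) :
    ∃ ε : ℝ, 0 < ε ∧ c + ε • v ∈ C := by
  obtain ⟨U, hUn, hloc⟩ := hU
  obtain ⟨r, hr, hball⟩ := Metric.mem_nhds_iff.1 hUn
  set ε : ℝ := r / (2 * (‖v‖ + 1)) with hε
  have hεpos : 0 < ε := by positivity
  refine ⟨ε, hεpos, ?_⟩
  have hmemU : c + ε • v ∈ U := by
    apply hball
    rw [Metric.mem_ball, dist_eq_norm]
    have h1 : c + ε • v - c = ε • v := by abel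
    rw [h1, norm_smul, Real.norm_eq_abs, abs_of_pos hεpos]
    have h2 : ε * (‖v‖ + 1) < r := by
      rw [hε, div_mul_eq_mul_div, div_lt_iff₀ (by positivity : (0:ℝ) < 2 * (‖v‖ + 1))]
      nlinarith [norm_nonneg v]
    nlinarith [norm_nonneg v]
  have hmemΓ : c + ε • v ∈ c +ᵥ Γc := by
    rw [Set.mem_vadd_set_iff_neg_vadd_mem]
    have : -c +ᵥ (c + ε • v) = ε • v := by rw [vadd_eq_add]; abel
    rw [this]
    exact hcone.2 ε hεpos.le v hv
  have : c + ε • v ∈ C ∩ U := by rw [hloc]; exact ⟨hmemΓ, hmemU⟩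
  exact this.1

/-- the local cone at any point of a convex set contains all of C - c -/
lemma sub_mem_local_cone {V : Type*} [NormedAddCommGroup V] [NormedSpace ℝ V]
    {C Γc : Set V} {c : V} (hconv : Convex ℝ C) (hc : c ∈ C) (hcone : IsCone Γc)
    (hU : ∃ U ∈ nhds c, C ∩ U = (c +ᵥ Γc) ∩ U) {z : V} (hz : z ∈ C) :
    z - c ∈ Γc := by
  obtain ⟨U, hUn, hloc⟩ := hU
  obtain ⟨r, hr, hball⟩ := Metric.mem_nhds_iff.1 hUn
  set t : ℝ := min (r / (2 * (‖z - c‖ + 1))) 1 with ht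
  have htpos : 0 < t := lt_min (by positivity) one_pos
  have ht1 : t ≤ 1 := min_le_right _ _
  have hpt : c + t • (z - c) ∈ C := by
    have := hconv hc hz (by linarith : (0:ℝ) ≤ 1 - t) htpos.le (by ring)
    have heq : (1 - t) • c + t • z = c + t • (z - c) := by module
    rwa [heq] at this
  have hmemU : c + t • (z - c) ∈ U := by
    apply hball
    rw [Metric.mem_ball, dist_eq_norm]
    have h1 : c + t • (z - c) - c = t • (z - c) := by abel
    rw [h1, norm_smul, Real.norm_eq_abs, abs_of_pos htpos]
    have h2 : t ≤ r / (2 * (‖z - c‖ + 1)) := min_le_left _ _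
    have h3 : r / (2 * (‖z - c‖ + 1)) * (‖z - c‖ + 1) < r := by
      rw [div_mul_eq_mul_div, div_lt_iff₀ (by positivity : (0:ℝ) < 2 * (‖z - c‖ + 1))]
      nlinarith [norm_nonneg (z - c)]
    nlinarith [norm_nonneg (z - c), htpos]
  have hmemΓ : c + t • (z - c) ∈ c +ᵥ Γc := by
    have : c + t • (z - c) ∈ C ∩ U := ⟨hpt, hmemU⟩
    rw [hloc] at this
    exact this.1
  rw [Set.mem_vadd_set_iff_neg_vadd_mem] at hmemΓ
  have heq2 : -c +ᵥ (c + t • (z - c)) = t • (z - c) := by rw [vadd_eq_add]; abel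
  rw [heq2] at hmemΓ
  have := hcone.2 t⁻¹ (by positivity) _ hmemΓ
  rwa [smul_smul, inv_mul_cancel₀ htpos.ne', one_smul] at this

/-- extreme points have proper local cones -/
lemma extreme_point_proper_cone {V : Type*} [NormedAddCommGroup V] [NormedSpace ℝ V]
    {C Γc : Set V} {c : V} (hcone : IsCone Γc)
    (hU : ∃ U ∈ nhds c, C ∩ U = (c +ᵥ Γc) ∩ U)
    (hext : c ∈ C.extremePoints ℝ) : IsProperCone Γc := by
  refine ⟨hcone, fun v hv hnv => ?_⟩
  obtain ⟨ε₁, hε₁, h1⟩ := local_step hcone hU hv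
  obtain ⟨ε₂, hε₂, h2⟩ := local_step hcone hU hnv
  have hseg : c ∈ openSegment ℝ (c + ε₁ • v) (c + ε₂ • (-v)) := by
    refine ⟨ε₂ / (ε₁ + ε₂), ε₁ / (ε₁ + ε₂), by positivity, by positivity, ?_, ?_⟩
    · field_simp
      ring
    · have hne : ε₁ + ε₂ ≠ 0 := by positivity
      have key : (ε₂ / (ε₁ + ε₂)) • (c + ε₁ • v) + (ε₁ / (ε₁ + ε₂)) • (c + ε₂ • (-v))
          = (ε₂ / (ε₁ + ε₂) + ε₁ / (ε₁ + ε₂)) • c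
            + (ε₂ / (ε₁ + ε₂) * ε₁ - ε₁ / (ε₁ + ε₂) * ε₂) • v := by module
      rw [key]
      have e1 : ε₂ / (ε₁ + ε₂) + ε₁ / (ε₁ + ε₂) = 1 := by field_simp; ring
      have e2 : ε₂ / (ε₁ + ε₂) * ε₁ - ε₁ / (ε₁ + ε₂) * ε₂ = 0 := by field_simp; ring
      rw [e1, e2, one_smul, zero_smul, add_zero]
  have := (mem_extremePoints.1 hext).2 _ h1 _ h2 hseg
  have h3 : c + ε₁ • v = c := this.1
  have h4 : ε₁ • v = 0 := by
    have h5 := congrArg (fun w => w - c) h3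
    simpa using h5
  rcases smul_eq_zero.1 h4 with h | h
  · exact absurd h hε₁.ne'
  · exact h

set_option maxHeartbeats 1000000 in
/-- Proposition 4.6: a nonempty closed convex locally polyhedral set contained in a
translate of a closed convex proper cone is the intersection of its proper local cones. -/
theorem closed_convex_locally_polyhedral_eq_iInter_proper_local_cones
    {V : Type*} [NormedAddCommGroup V] [NormedSpace ℝ V] [FiniteDimensional ℝ V]
    (C : Set V) (hne : C.Nonempty) (hclosed : IsClosed C) (hconv : Convex ℝ C)
    (Γloc : V → Set V)
    (hΓcone : ∀ c ∈ C, IsCone (Γloc c))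
    (hΓconv : ∀ c ∈ C, Convex ℝ (Γloc c))
    (hlocal : ∀ c ∈ C, ∃ U ∈ nhds c, C ∩ U = (c +ᵥ Γloc c) ∩ U)
    (x : V) (Γ : Set V) (hΓclosed : IsClosed Γ) (hΓconvex : Convex ℝ Γ)
    (hΓproper : IsProperCone Γ)
    (hsub : C ⊆ x +ᵥ Γ) :
    C = ⋂ c ∈ {c ∈ C | IsProperCone (Γloc c)}, (c +ᵥ Γloc c) := by
  apply Set.Subset.antisymm
  · -- easy direction
    intro z hz
    rw [Set.mem_iInter₂]
    rintro c ⟨hcC, -⟩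
    rw [Set.mem_vadd_set_iff_neg_vadd_mem, vadd_eq_add]
    have : -c + z = z - c := by abel
    rw [this]
    exact sub_mem_local_cone hconv hcC (hΓcone c hcC) (hlocal c hcC) hz
  · -- hard direction
    intro y hy
    by_contra hyC
    obtain ⟨f, α, hfy, hfC⟩ := geometric_hahn_banach_point_closed hconv hclosed hyC
    obtain ⟨g, u, hu, hg⟩ := exists_coercive_functional hΓclosed hΓconvex hΓproper
    set δ : ℝ := α - f y with hδdef
    have hδ : 0 < δ := by simp [hδdef]; linarith
    set s : ℝ := δ / (|g y - g x| + 1) with hsdef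
    have hs : 0 < s := by positivity
    have hsmall : s * (g y - g x) < δ := by
      have h1 : s * (|g y - g x| + 1) = δ := div_mul_cancel₀ _ (by positivity)
      nlinarith [abs_nonneg (g y - g x), le_abs_self (g y - g x), hs]
    set h : V →L[ℝ] ℝ := f + s • g with hhdef
    have happ : ∀ v : V, h v = f v + s * g v := fun v => by
      simp [hhdef, ContinuousLinearMap.add_apply, ContinuousLinearMap.smul_apply, smul_eq_mul]
    obtain ⟨c₁, hc₁⟩ := hne
    set β : ℝ := h c₁ with hβdef
    set Sβ : Set V := C ∩ {v | h v ≤ β} with hSβdef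
    have hSβclosed : IsClosed Sβ := hclosed.inter (isClosed_le h.continuous continuous_const)
    -- boundedness of Sβ
    have hgx : ∀ c ∈ C, g x + u * ‖c - x‖ ≤ g c := by
      intro c hc
      have hmem := hsub hc
      rw [Set.mem_vadd_set_iff_neg_vadd_mem, vadd_eq_add] at hmem
      have heq : -x + c = c - x := by abel
      rw [heq] at hmem
      have := hg _ hmem
      have hgsub : g (c - x) = g c - g x := by rw [map_sub]
      linarith [this, hgsub ▸ this]
    set R : ℝ := ((β - α) / s - g x) / u with hRdef
    have hbound : ∀ c ∈ Sβ, ‖c‖ ≤ ‖x‖ + R := by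
      rintro c ⟨hcC, hch⟩
      have h1 : α < f c := hfC c hcC
      have h2 : f c + s * g c ≤ β := by rw [← happ]; exact hch
      have h3 : g c ≤ (β - α) / s := by
        rw [le_div_iff₀ hs]
        nlinarith
      have h4 := hgx c hcC
      have h5 : ‖c - x‖ ≤ R := by
        rw [hRdef, le_div_iff₀ hu]
        nlinarith
      calc ‖c‖ = ‖c - x + x‖ := by congr 1; abel
        _ ≤ ‖c - x‖ + ‖x‖ := norm_add_le _ _
        _ ≤ ‖x‖ + R := by linarith
    have hSβcompact : IsCompact Sβ := by
      refine (isCompact_closedBall (0:V) (‖x‖ + R)).of_isClosed_subset hSβclosed ?_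
      intro c hc
      rw [Metric.mem_closedBall, dist_zero_right]
      exact hbound c hc
    have hSβne : Sβ.Nonempty := ⟨c₁, hc₁, show h c₁ ≤ β from le_rfl⟩
    obtain ⟨c₀, hc₀S, hmin⟩ := hSβcompact.exists_isMinOn hSβne h.continuous.continuousOn
    set m : ℝ := h c₀ with hmdef
    have hmC : ∀ c ∈ C, m ≤ h c := by
      intro c hc
      by_cases hcle : h c ≤ β
      · exact hmin ⟨hc, hcle⟩
      · have : m ≤ β := hmin ⟨hc₁, show h c₁ ≤ β from le_rfl⟩
        push_neg at hcle
        linarith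
    set F : Set V := {c ∈ C | h c = m} with hFdef
    have hexp : IsExposed ℝ C F := by
      intro _
      refine ⟨-h, ?_⟩
      ext c
      simp only [hFdef, Set.mem_setOf_eq, ContinuousLinearMap.neg_apply, neg_le_neg_iff]
      constructor
      · rintro ⟨hcC, hcm⟩
        exact ⟨hcC, fun z hz => by rw [hcm]; exact hmC z hz⟩
      · rintro ⟨hcC, hall⟩
        refine ⟨hcC, le_antisymm ?_ (hmC c hcC)⟩
        have := hall c₀ hc₀S.1
        linarith [this]
    have hFclosed : IsClosed F := hclosed.inter (isClosed_eq h.continuous continuous_const)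
    have hFsub : F ⊆ Sβ := by
      rintro c ⟨hcC, hcm⟩
      refine ⟨hcC, show h c ≤ β from ?_⟩
      rw [hcm]
      exact hmin ⟨hc₁, show h c₁ ≤ β from le_rfl⟩
    have hFcompact : IsCompact F := hSβcompact.of_isClosed_subset hFclosed hFsub
    have hFne : F.Nonempty := ⟨c₀, hc₀S.1, rfl⟩
    obtain ⟨e, he⟩ := hFcompact.extremePoints_nonempty hFne
    have heC : e ∈ C.extremePoints ℝ :=
      (hexp.isExtreme).extremePoints_subset_extremePoints he
    have heF : e ∈ F := he.1
    have heCm : e ∈ C := heF.1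
    have hem : h e = m := heF.2
    have hproper : IsProperCone (Γloc e) :=
      extreme_point_proper_cone (hΓcone e heCm) (hlocal e heCm) heC
    -- y lies in e's local cone translate
    have hyloc : y ∈ e +ᵥ Γloc e := by
      have := Set.mem_iInter₂.1 hy e ⟨heCm, hproper⟩
      exact this
    rw [Set.mem_vadd_set_iff_neg_vadd_mem, vadd_eq_add] at hyloc
    obtain ⟨ε, hε, hstep⟩ := local_step (hΓcone e heCm) (hlocal e heCm) hyloc
    have hkey : m ≤ h (e + ε • (-e + y)) := hmC _ hstep
    have hexpand : h (e + ε • (-e + y)) = h e + ε * (h y - h e) := by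
      rw [map_add, map_smul, map_add, map_neg, smul_eq_mul]
      ring
    have hyge : m ≤ h y := by
      rw [hexpand, hem] at hkey
      nlinarith
    -- but h y < m
    have hylt : h y < m := by
      have h1 : h y = f y + s * g y := happ y
      have h2 : m = f c₀ + s * g c₀ := happ c₀
      have h3 : α < f c₀ := hfC c₀ hc₀S.1
      have h4 := hgx c₀ hc₀S.1
      have h5 : 0 ≤ u * ‖c₀ - x‖ := by positivity
      have h6 : g x ≤ g c₀ := by linarith
      have h7 : f y = α - δ := by rw [hδdef]; ring
      have h8 : s * g x ≤ s * g c₀ := mul_le_mul_of_nonneg_left h6 hs.le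
      have h9 : s * g y - s * g x < δ := by nlinarith [hsmall]
      linarith
    linarith
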